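/- Let K₁,…,K_n ∈ C²₊ be convex bodies and φ₁,…,φ_n ∈ Conc(0,∞). For 1 ≤ m ≤ n, as(φ₁,K₁;…;φ_n,K_n)^m ≤ ∏_{i=0}^{m-1} as(φ₁,K₁; …; φ_{n-m},K_{n-m}; φ_{n-i},K_{n-i}; …; φ_{n-i},K_{n-i}), where in the i-th factor the pair (φ_{n-i}, K_{n-i}) is repeated m times. -/

import Mathlib

open MeasureTheory Filter

/-- Membership in the class `Conc(0,∞)`. -/
def MemConc (φ : ℝ → ℝ) : Prop :=
  (∀ t : ℝ, 0 < t → 0 < φ t) ∧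
    ((∃ c : ℝ, 0 < c ∧ ∀ t : ℝ, 0 < t → φ t = c) ∨
      (ConcaveOn ℝ (Set.Ioi 0) φ ∧
        Tendsto φ (nhdsWithin 0 (Set.Ioi 0)) (nhds 0) ∧
        Tendsto (fun t => φ t / t) atTop (nhds 0)))

open scoped ENNReal in
theorem my_integral_prod_rpow_le {α ι : Type*} [MeasurableSpace α] {μ : Measure α}
    (s : Finset ι) {f : ι → α → ℝ} (hf : ∀ i ∈ s, Integrable (f i) μ)
    (hnn : ∀ i ∈ s, ∀ a, 0 ≤ f i a)
    {p : ι → ℝ} (hp : ∑ i ∈ s, p i = 1) (h2p : ∀ i ∈ s, 0 ≤ p i) :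
    ∫ a, ∏ i ∈ s, f i a ^ p i ∂μ ≤ ∏ i ∈ s, (∫ a, f i a ∂μ) ^ p i := by
  have key := ENNReal.lintegral_prod_norm_pow_le (μ := μ) s
    (f := fun i a => ENNReal.ofReal (f i a))
    (fun i hi => ((hf i hi).aemeasurable).ennreal_ofReal) hp h2p
  have hfint : ∀ i ∈ s, ∫⁻ a, ENNReal.ofReal (f i a) ∂μ ≠ ∞ :=
    fun i hi => ((hf i hi).lintegral_lt_top).ne
  have hL : ∫ a, ∏ i ∈ s, f i a ^ p i ∂μ
      = (∫⁻ a, ∏ i ∈ s, ENNReal.ofReal (f i a) ^ p i ∂μ).toReal := by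
    rw [integral_eq_lintegral_of_nonneg_ae
      (Filter.Eventually.of_forall fun a => Finset.prod_nonneg fun i hi =>
        Real.rpow_nonneg (hnn i hi a) _)
      (Finset.aestronglyMeasurable_fun_prod _ fun i hi =>
        ((hf i hi).aestronglyMeasurable.aemeasurable.pow_const (p i)).aestronglyMeasurable)]
    congr 1
    refine lintegral_congr fun a => ?_
    rw [ENNReal.ofReal_prod_of_nonneg (fun i hi => Real.rpow_nonneg (hnn i hi a) _)]
    exact Finset.prod_congr rfl fun i hi =>
      (ENNReal.ofReal_rpow_of_nonneg (hnn i hi a) (h2p i hi)).symm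
  have hR : ∀ i ∈ s, (∫ a, f i a ∂μ)
      = (∫⁻ a, ENNReal.ofReal (f i a) ∂μ).toReal := fun i hi =>
    integral_eq_lintegral_of_nonneg_ae (Filter.Eventually.of_forall (hnn i hi))
      (hf i hi).aestronglyMeasurable
  rw [hL]
  calc (∫⁻ a, ∏ i ∈ s, ENNReal.ofReal (f i a) ^ p i ∂μ).toReal
      ≤ (∏ i ∈ s, (∫⁻ a, ENNReal.ofReal (f i a) ∂μ) ^ p i).toReal := by
        refine ENNReal.toReal_mono ?_ key
        exact (ENNReal.prod_lt_top (fun i hi =>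
          (ENNReal.rpow_lt_top_of_nonneg (h2p i hi) (hfint i hi)))).ne
    _ = ∏ i ∈ s, (∫ a, f i a ∂μ) ^ p i := by
        rw [ENNReal.toReal_prod]
        exact Finset.prod_congr rfl fun i hi => by
          rw [hR i hi, ENNReal.toReal_rpow]

theorem stmt13 {n m : ℕ} (hm1 : 1 ≤ m) (hmn : m ≤ n)
    (hK fK : ℕ → Metric.sphere (0 : EuclideanSpace ℝ (Fin n)) 1 → ℝ)
    (hKpos : ∀ i u, 0 < hK i u) (fKpos : ∀ i u, 0 < fK i u)
    (hKcont : ∀ i, Continuous (hK i)) (fKcont : ∀ i, Continuous (fK i))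
    (φ : ℕ → ℝ → ℝ) (hφ : ∀ i, MemConc (φ i)) :
    (∫ u, ∏ i ∈ Finset.Icc 1 n,
        (φ i (1 / (fK i u * hK i u ^ (n + 1))) * hK i u * fK i u) ^ ((n : ℝ)⁻¹)
        ∂(μH[(n - 1 : ℝ)])) ^ m
      ≤ ∏ i ∈ Finset.range m,
          ∫ u, (∏ j ∈ Finset.Icc 1 (n - m),
              (φ j (1 / (fK j u * hK j u ^ (n + 1))) * hK j u * fK j u) ^ ((n : ℝ)⁻¹))
            * (φ (n - i) (1 / (fK (n - i) u * hK (n - i) u ^ (n + 1)))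
                * hK (n - i) u * fK (n - i) u) ^ ((m : ℝ) / n)
            ∂(μH[(n - 1 : ℝ)]) := by
  classical
  have hn1 : 1 ≤ n := le_trans hm1 hmn
  set μ : Measure (Metric.sphere (0 : EuclideanSpace ℝ (Fin n)) 1) := μH[(n - 1 : ℝ)] with hμ
  set g : ℕ → Metric.sphere (0 : EuclideanSpace ℝ (Fin n)) 1 → ℝ :=
    fun i u => φ i (1 / (fK i u * hK i u ^ (n + 1))) * hK i u * fK i u with hgdef
  have hg' : ∀ i u, φ i (1 / (fK i u * hK i u ^ (n + 1))) * hK i u * fK i u = g i u :=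
    fun i u => by rw [hgdef]
  simp only [hg']
  set H : ℕ → Metric.sphere (0 : EuclideanSpace ℝ (Fin n)) 1 → ℝ :=
    fun i u => (∏ j ∈ Finset.Icc 1 (n - m), g j u ^ ((n : ℝ)⁻¹))
      * g (n - i) u ^ ((m : ℝ) / n) with hHdef
  have hH' : ∀ i u, (∏ j ∈ Finset.Icc 1 (n - m), g j u ^ ((n : ℝ)⁻¹))
      * g (n - i) u ^ ((m : ℝ) / n) = H i u := fun i u => by rw [hHdef]
  simp only [hH']
  have gpos : ∀ i u, 0 < g i u := fun i u => by
    rw [← hg']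
    exact mul_pos (mul_pos ((hφ i).1 _
      (div_pos one_pos (mul_pos (fKpos i u) (pow_pos (hKpos i u) _)))) (hKpos i u)) (fKpos i u)
  have φcont : ∀ i, ContinuousOn (φ i) (Set.Ioi 0) := by
    intro i
    rcases (hφ i).2 with ⟨c, _, hc⟩ | ⟨hconc, _, _⟩
    · exact continuousOn_const.congr fun t ht => hc t ht
    · exact hconc.continuousOn isOpen_Ioi
  have gcont : ∀ i, Continuous (g i) := by
    intro i
    have hψ : Continuous fun u : Metric.sphere (0 : EuclideanSpace ℝ (Fin n)) 1 =>
        1 / (fK i u * hK i u ^ (n + 1)) := by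
      refine continuous_const.div ((fKcont i).mul ((hKcont i).pow _)) fun u =>
        (mul_pos (fKpos i u) (pow_pos (hKpos i u) _)).ne'
    rw [hgdef]
    exact (((φcont i).comp_continuous hψ fun u => Set.mem_Ioi.mpr
      (div_pos one_pos (mul_pos (fKpos i u) (pow_pos (hKpos i u) _)))).mul
        (hKcont i)).mul (fKcont i)
  have Hcont : ∀ i, Continuous (H i) := by
    intro i
    rw [hHdef]
    refine Continuous.mul ?_ ((gcont (n - i)).rpow_const fun u => Or.inl (gpos _ u).ne')
    exact continuous_finset_prod _ fun j _ => (gcont j).rpow_const fun u => Or.inl (gpos _ u).ne'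
  have Hpos : ∀ i u, 0 < H i u := fun i u => by
    rw [← hH']
    exact mul_pos (Finset.prod_pos fun j _ => Real.rpow_pos_of_pos (gpos j u) _)
      (Real.rpow_pos_of_pos (gpos _ u) _)
  have hmR : (m : ℝ) ≠ 0 := Nat.cast_ne_zero.mpr (by omega)
  have hnR : (n : ℝ) ≠ 0 := Nat.cast_ne_zero.mpr (by omega)
  have hIcc : ∀ k : ℕ, Finset.Icc 1 k = Finset.Ioc 0 k := fun k => by
    ext x; simp only [Finset.mem_Icc, Finset.mem_Ioc]; omega
  -- pointwise key identity
  have key : ∀ u, ∏ i ∈ Finset.Icc 1 n, g i u ^ ((n : ℝ)⁻¹)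
      = ∏ i ∈ Finset.range m, H i u ^ ((m : ℝ)⁻¹) := by
    intro u
    have hPnn : (0:ℝ) ≤ ∏ j ∈ Finset.Icc 1 (n - m), g j u ^ ((n : ℝ)⁻¹) :=
      Finset.prod_nonneg fun j _ => Real.rpow_nonneg (gpos j u).le _
    have hsplit : ∏ i ∈ Finset.Icc 1 n, g i u ^ ((n : ℝ)⁻¹)
        = (∏ j ∈ Finset.Icc 1 (n - m), g j u ^ ((n : ℝ)⁻¹)) *
          ∏ i ∈ Finset.range m, g (n - i) u ^ ((n : ℝ)⁻¹) := by
      rw [hIcc, hIcc,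
        ← Finset.prod_Ioc_consecutive _ (Nat.zero_le (n - m)) (Nat.sub_le n m)]
      congr 1
      refine Finset.prod_nbij' (fun j => n - j) (fun i => n - i) ?_ ?_ ?_ ?_ ?_
      · intro a ha
        simp only [Finset.mem_Ioc] at ha
        simp only [Finset.mem_range]
        omega
      · intro a ha
        simp only [Finset.mem_range] at ha
        simp only [Finset.mem_Ioc]
        omega
      · intro a ha
        simp only [Finset.mem_Ioc] at ha
        show n - (n - a) = a
        omega
      · intro a ha
        simp only [Finset.mem_range] at ha
        show n - (n - a) = a
        omega
      · intro a ha
        simp only [Finset.mem_Ioc] at ha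
        show g a u ^ ((n : ℝ)⁻¹) = g (n - (n - a)) u ^ ((n : ℝ)⁻¹)
        rw [Nat.sub_sub_self ha.2]
    have hexp : ((m : ℝ) / n) * (m : ℝ)⁻¹ = (n : ℝ)⁻¹ := by
      field_simp
    have hfac : ∀ i ∈ Finset.range m, H i u ^ ((m : ℝ)⁻¹)
        = (∏ j ∈ Finset.Icc 1 (n - m), g j u ^ ((n : ℝ)⁻¹)) ^ ((m : ℝ)⁻¹)
          * g (n - i) u ^ ((n : ℝ)⁻¹) := by
      intro i _
      rw [← hH', Real.mul_rpow hPnn (Real.rpow_nonneg (gpos _ u).le _),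
        ← Real.rpow_mul (gpos _ u).le, hexp]
    rw [hsplit, Finset.prod_congr rfl hfac, Finset.prod_mul_distrib, Finset.prod_const,
      Finset.card_range, ← Real.rpow_natCast (_ ^ ((m:ℝ)⁻¹)) m, ← Real.rpow_mul hPnn,
      inv_mul_cancel₀ hmR, Real.rpow_one]
  have hIL : (∫ u, ∏ i ∈ Finset.Icc 1 n, g i u ^ ((n : ℝ)⁻¹) ∂μ)
      = ∫ u, ∏ i ∈ Finset.range m, H i u ^ ((m : ℝ)⁻¹) ∂μ :=
    integral_congr_ae (Filter.Eventually.of_forall key)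
  rw [hIL]
  have hne : Nonempty (Metric.sphere (0 : EuclideanSpace ℝ (Fin n)) 1) := by
    refine ⟨⟨EuclideanSpace.single (⟨0, by omega⟩ : Fin n) (1:ℝ), ?_⟩⟩
    rw [mem_sphere_zero_iff_norm, EuclideanSpace.norm_single, norm_one]
  rcases eq_top_or_lt_top (μ Set.univ) with hinf | hfin
  · -- infinite measure : both sides vanish
    have notint : ∀ F : Metric.sphere (0 : EuclideanSpace ℝ (Fin n)) 1 → ℝ,
        Continuous F → (∀ u, 0 < F u) → ¬ Integrable F μ := by
      intro F hFc hFpos hint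
      obtain ⟨u0, -, hu0⟩ := isCompact_univ.exists_isMinOn Set.univ_nonempty
        hFc.continuousOn
      have hconst : Integrable (fun _ : Metric.sphere (0 : EuclideanSpace ℝ (Fin n)) 1
          => F u0) μ := by
        refine hint.mono' aestronglyMeasurable_const (Filter.Eventually.of_forall fun a => ?_)
        rw [Real.norm_of_nonneg (hFpos u0).le]
        exact hu0 (Set.mem_univ a)
      rcases (integrable_const_iff).mp hconst with h | h
      · exact (hFpos u0).ne' h
      · exact absurd hinf h.measure_univ_lt_top.ne
    have hL0 : (∫ u, ∏ i ∈ Finset.range m, H i u ^ ((m : ℝ)⁻¹) ∂μ) = 0 := by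
      refine integral_undef (notint _ ?_ ?_)
      · exact continuous_finset_prod _ fun i _ =>
          (Hcont i).rpow_const fun u => Or.inl (Hpos i u).ne'
      · exact fun u => Finset.prod_pos fun i _ => Real.rpow_pos_of_pos (Hpos i u) _
    have hR0 : ∀ i ∈ Finset.range m, (∫ u, H i u ∂μ) = 0 := fun i _ =>
      integral_undef (notint _ (Hcont i) (Hpos i))
    rw [hL0, Finset.prod_congr rfl hR0, Finset.prod_const, Finset.card_range]
  · -- finite measure : Hölder
    haveI : IsFiniteMeasure μ := ⟨hfin⟩
    have hint : ∀ i ∈ Finset.range m, Integrable (H i) μ := by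
      intro i _
      obtain ⟨u0, -, hu0⟩ := isCompact_univ.exists_isMaxOn Set.univ_nonempty
        (Hcont i).continuousOn
      refine Integrable.mono' (integrable_const (μ := μ) (H i u0))
        (Hcont i).aestronglyMeasurable (Filter.Eventually.of_forall fun a => ?_)
      rw [Real.norm_of_nonneg (Hpos i a).le]
      exact hu0 (Set.mem_univ a)
    have hsum : ∑ _i ∈ Finset.range m, (m : ℝ)⁻¹ = 1 := by
      rw [Finset.sum_const, Finset.card_range, nsmul_eq_mul, mul_inv_cancel₀ hmR]
    have holder := my_integral_prod_rpow_le (μ := μ) (Finset.range m)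
      hint (fun i _ a => (Hpos i a).le) hsum (fun i _ => by positivity)
    calc (∫ u, ∏ i ∈ Finset.range m, H i u ^ ((m : ℝ)⁻¹) ∂μ) ^ m
        ≤ (∏ i ∈ Finset.range m, (∫ u, H i u ∂μ) ^ ((m : ℝ)⁻¹)) ^ m := by
          refine pow_le_pow_left₀ ?_ holder m
          exact integral_nonneg fun u => Finset.prod_nonneg fun i _ =>
            Real.rpow_nonneg (Hpos i u).le _
      _ = ∏ i ∈ Finset.range m, ∫ u, H i u ∂μ := by
          rw [← Finset.prod_pow]
          refine Finset.prod_congr rfl fun i hi => ?_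
          have h0 : (0:ℝ) ≤ ∫ u, H i u ∂μ := integral_nonneg fun u => (Hpos i u).le
          rw [← Real.rpow_natCast ((∫ u, H i u ∂μ) ^ ((m:ℝ)⁻¹)) m, ← Real.rpow_mul h0,
            inv_mul_cancel₀ hmR, Real.rpow_one]
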